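/- arXiv:2112.08638 — 3 statements merged into one kernel-verified Lean document; each statement's English description precedes it below -/
import Mathlib

section
/- If for some query node q of Q the set {v ∈ V_G : (q,v) ∈ FB} is empty, where FB is the double simulation of Q by G, then there exists no homomorphism from Q to G (the answer of Q on G is empty). -/
/-- A binary relation `S` between the nodes of a hybrid graph pattern query
and the nodes of a data graph satisfies the double-simulation conditions. -/
def DSim {VQ VG L : Type*} (Ed Er : VQ → VQ → Prop) (labQ : VQ → L)
    (E : VG → VG → Prop) (labG : VG → L) (S : VQ → VG → Prop) : Prop :=
  ∀ q v, S q v →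
    labQ q = labG v ∧
    (∀ q', Ed q q' → ∃ v', S q' v' ∧ E v v') ∧
    (∀ q', Er q q' → ∃ v', S q' v' ∧ Relation.TransGen E v v') ∧
    (∀ q', Ed q' q → ∃ v', S q' v' ∧ E v' v) ∧
    (∀ q', Er q' q → ∃ v', S q' v' ∧ Relation.TransGen E v' v)

/-- `h` is a homomorphism from the hybrid graph pattern query `Q` to the
data graph `G`. -/
def IsHom {VQ VG L : Type*} (Ed Er : VQ → VQ → Prop) (labQ : VQ → L)
    (E : VG → VG → Prop) (labG : VG → L) (h : VQ → VG) : Prop :=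
  (∀ q, labQ q = labG (h q)) ∧
  (∀ p q, Ed p q → E (h p) (h q)) ∧
  (∀ p q, Er p q → Relation.TransGen E (h p) (h q))

/-- If for some query node `q` the set of data nodes paired with `q` in the
double simulation `FB` (the union of all relations satisfying the
double-simulation conditions) is empty, then there is no homomorphism from
`Q` to `G` (the answer of `Q` on `G` is empty). -/
theorem empty_dsim_no_hom {VQ VG L : Type*} (Ed Er : VQ → VQ → Prop)
    (labQ : VQ → L) (E : VG → VG → Prop) (labG : VG → L)
    (hempty : ∃ q : VQ, ∀ v : VG, ¬ ∃ S, DSim Ed Er labQ E labG S ∧ S q v) :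
    ¬ ∃ h : VQ → VG, IsHom Ed Er labQ E labG h := by
  rintro ⟨h, hlab, hd, hr⟩
  obtain ⟨q, hq⟩ := hempty
  refine hq (h q) ⟨fun p v => v = h p, ?_, rfl⟩
  rintro p v rfl
  exact ⟨hlab p,
    fun q' hq' => ⟨h q', rfl, hd _ _ hq'⟩,
    fun q' hq' => ⟨h q', rfl, hr _ _ hq'⟩,
    fun q' hq' => ⟨h q', rfl, hd _ _ hq'⟩,
    fun q' hq' => ⟨h q', rfl, hr _ _ hq'⟩⟩
end

section
/- AGM bound for hybrid pattern queries: let G be a data graph with finite node set V_G and let x be a fractional edge cover of Q, assigning a real x_e > 0 to every edge e of Q such that for every query node q the sum of x_e over edges e incident to q is at least 1. Then the number of homomorphisms from Q to G is at most the product over all edges e of Q of |ms(e)|^{x_e}, where |ms(e)| is the cardinality of the match set of e. -/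
open scoped Classical
open Finset


private lemma holder_pos {A ι : Type*} [Fintype A] (T : Finset ι) (c : ι → A → ℝ)
    (x : ι → ℝ) (hc : ∀ e ∈ T, ∀ a, 0 ≤ c e a) (hx : ∀ e ∈ T, 0 < x e)
    (hsum : 1 ≤ ∑ e ∈ T, x e) :
    ∑ a : A, ∏ e ∈ T, (c e a) ^ (x e) ≤ ∏ e ∈ T, (∑ a : A, c e a) ^ (x e) := by
  by_cases hC : ∃ e ∈ T, ∑ a : A, c e a ≤ 0
  · obtain ⟨e, heT, he⟩ := hC
    have hCz : ∀ a, c e a = 0 := fun a =>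
      (Finset.sum_eq_zero_iff_of_nonneg (fun a _ => hc e heT a)).1
        (le_antisymm he (Finset.sum_nonneg fun a _ => hc e heT a)) a (mem_univ a)
    have hL : ∑ a : A, ∏ e' ∈ T, (c e' a) ^ (x e') = 0 := by
      refine Finset.sum_eq_zero fun a _ => Finset.prod_eq_zero heT ?_
      rw [hCz a, Real.zero_rpow (ne_of_gt (hx e heT))]
    rw [hL]
    exact Finset.prod_nonneg fun e' he' =>
      Real.rpow_nonneg (Finset.sum_nonneg fun a _ => hc e' he' a) _
  push_neg at hC
  set C : ι → ℝ := fun e => ∑ a : A, c e a with hCdef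
  set s := ∑ e ∈ T, x e with hsdef
  have hs0 : (0 : ℝ) < s := lt_of_lt_of_le one_pos hsum
  have hr0 : ∀ a, ∀ e ∈ T, 0 ≤ c e a / C e := fun a e he =>
    div_nonneg (hc e he a) (hC e he).le
  have hr1 : ∀ a, ∀ e ∈ T, c e a / C e ≤ 1 := fun a e he =>
    (div_le_one (hC e he)).2 (Finset.single_le_sum (fun a _ => hc e he a) (mem_univ a))
  have hfac : ∀ a, ∏ e ∈ T, (c e a) ^ (x e)
      = (∏ e ∈ T, (c e a / C e) ^ (x e)) * ∏ e ∈ T, (C e) ^ (x e) := by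
    intro a
    rw [← Finset.prod_mul_distrib]
    refine Finset.prod_congr rfl fun e he => ?_
    rw [← Real.mul_rpow (hr0 a e he) (hC e he).le, div_mul_cancel₀ _ (ne_of_gt (hC e he))]
  have hK : ∑ a : A, ∏ e ∈ T, (c e a / C e) ^ (x e) ≤ 1 := by
    have step : ∀ a : A, ∏ e ∈ T, (c e a / C e) ^ (x e)
        ≤ ∑ e ∈ T, (x e / s) * (c e a / C e) := by
      intro a
      calc ∏ e ∈ T, (c e a / C e) ^ (x e)
          ≤ ∏ e ∈ T, (c e a / C e) ^ (x e / s) := by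
            refine Finset.prod_le_prod (fun e he => Real.rpow_nonneg (hr0 a e he) _)
              (fun e he => ?_)
            rcases eq_or_lt_of_le (hr0 a e he) with h0 | hpos
            · rw [← h0, Real.zero_rpow (ne_of_gt (hx e he)),
                Real.zero_rpow (ne_of_gt (div_pos (hx e he) hs0))]
            · exact Real.rpow_le_rpow_of_exponent_ge hpos (hr1 a e he)
                (div_le_self (hx e he).le hsum)
        _ ≤ ∑ e ∈ T, (x e / s) * (c e a / C e) :=
            Real.geom_mean_le_arith_mean_weighted T _ _
              (fun e he => div_nonneg (hx e he).le hs0.le)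
              (by rw [← Finset.sum_div, ← hsdef, div_self (ne_of_gt hs0)])
              (fun e he => hr0 a e he)
    calc ∑ a : A, ∏ e ∈ T, (c e a / C e) ^ (x e)
        ≤ ∑ a : A, ∑ e ∈ T, (x e / s) * (c e a / C e) :=
          Finset.sum_le_sum fun a _ => step a
      _ = ∑ e ∈ T, (x e / s) * ((∑ a : A, c e a) / C e) := by
          rw [Finset.sum_comm]
          refine Finset.sum_congr rfl fun e he => ?_
          rw [← Finset.mul_sum, ← Finset.sum_div]
      _ = ∑ e ∈ T, x e / s := by
          refine Finset.sum_congr rfl fun e he => ?_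
          have : (∑ a : A, c e a) / C e = 1 := div_self (ne_of_gt (hC e he))
          rw [this, mul_one]
      _ = 1 := by rw [← Finset.sum_div, ← hsdef, div_self (ne_of_gt hs0)]
  calc ∑ a : A, ∏ e ∈ T, (c e a) ^ (x e)
      = (∑ a : A, ∏ e ∈ T, (c e a / C e) ^ (x e)) * ∏ e ∈ T, (C e) ^ (x e) := by
        rw [Finset.sum_mul]; exact Finset.sum_congr rfl fun a _ => hfac a
    _ ≤ ∏ e ∈ T, (C e) ^ (x e) :=
        mul_le_of_le_one_left (Finset.prod_nonneg fun e he =>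
          Real.rpow_nonneg (hC e he).le _) hK

private lemma holder_aux {A ι : Type*} [Fintype A] (T : Finset ι) (c : ι → A → ℝ)
    (x : ι → ℝ) (hc : ∀ e ∈ T, ∀ a, 0 ≤ c e a) (hx : ∀ e ∈ T, 0 ≤ x e)
    (hsum : 1 ≤ ∑ e ∈ T, x e) :
    ∑ a : A, ∏ e ∈ T, (c e a) ^ (x e) ≤ ∏ e ∈ T, (∑ a : A, c e a) ^ (x e) := by
  set T' := T.filter (fun e => 0 < x e) with hT'
  have hsub : T' ⊆ T := filter_subset _ _
  have hzero : ∀ e ∈ T, e ∉ T' → x e = 0 := by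
    intro e he he'
    by_contra h
    exact he' (mem_filter.2 ⟨he, lt_of_le_of_ne (hx e he) (Ne.symm h)⟩)
  have hL : ∀ (g : ι → ℝ), ∏ e ∈ T, (g e) ^ (x e) = ∏ e ∈ T', (g e) ^ (x e) := fun g =>
    (Finset.prod_subset hsub (fun e he he' => by rw [hzero e he he', Real.rpow_zero])).symm
  have hsum' : 1 ≤ ∑ e ∈ T', x e := by
    rwa [Finset.sum_subset hsub (fun e he he' => hzero e he he')]
  calc ∑ a : A, ∏ e ∈ T, (c e a) ^ (x e)
      = ∑ a : A, ∏ e ∈ T', (c e a) ^ (x e) :=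
        Finset.sum_congr rfl fun a _ => hL (fun e => c e a)
    _ ≤ ∏ e ∈ T', (∑ a : A, c e a) ^ (x e) :=
        holder_pos T' c x (fun e he => hc e (hsub he)) (fun e he => (mem_filter.1 he).2)
          hsum'
    _ = ∏ e ∈ T, (∑ a : A, c e a) ^ (x e) := (hL _).symm

private lemma agm_general {VQ VG ι : Type*} [Fintype VQ] [Fintype VG] [Fintype ι]
    (d₀ : VG) (T : Finset ι) (x : ι → ℝ) (hx : ∀ e ∈ T, 0 ≤ x e)
    (s : Finset VQ) (S : ι → Finset VQ) (R : ι → Set (VQ → VG))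
    (hdet : ∀ e ∈ T, ∀ f g : VQ → VG, (∀ v ∈ S e, f v = g v) → (f ∈ R e ↔ g ∈ R e))
    (hS : ∀ e ∈ T, S e ⊆ s)
    (hcov : ∀ v ∈ s, 1 ≤ ∑ e ∈ T.filter (fun e => v ∈ S e), x e) :
    ((Finset.univ.filter (fun f : VQ → VG =>
        (∀ e ∈ T, f ∈ R e) ∧ ∀ v, v ∉ s → f v = d₀)).card : ℝ) ≤
      ∏ e ∈ T, ((Finset.univ.filter (fun f : VQ → VG =>
        f ∈ R e ∧ ∀ v, v ∉ S e → f v = d₀)).card : ℝ) ^ (x e) := by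
  induction s using Finset.induction_on generalizing S R with
  | empty =>
    have hSe : ∀ e ∈ T, S e = ∅ := fun e he => subset_empty.1 (hS e he)
    set big := Finset.univ.filter (fun f : VQ → VG =>
        (∀ e ∈ T, f ∈ R e) ∧ ∀ v, v ∉ (∅ : Finset VQ) → f v = d₀) with hbig
    by_cases hne : big.Nonempty
    · obtain ⟨f₀, hf₀⟩ := hne
      rw [hbig, mem_filter] at hf₀
      have hcard1 : big.card ≤ 1 := by
        refine Finset.card_le_one.2 fun f hf g hg => funext fun v => ?_
        rw [hbig, mem_filter] at hf hg
        rw [hf.2.2 v (notMem_empty v), hg.2.2 v (notMem_empty v)]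
      have h1 : (big.card : ℝ) ≤ 1 := by exact_mod_cast hcard1
      have hfact : ∀ e ∈ T, (1:ℝ) ≤ ((Finset.univ.filter (fun f : VQ → VG =>
          f ∈ R e ∧ ∀ v, v ∉ S e → f v = d₀)).card : ℝ) ^ (x e) := by
        intro e he
        have hmem : f₀ ∈ Finset.univ.filter (fun f : VQ → VG =>
            f ∈ R e ∧ ∀ v, v ∉ S e → f v = d₀) :=
          mem_filter.2 ⟨mem_univ _, hf₀.2.1 e he, fun v _ => hf₀.2.2 v (notMem_empty v)⟩
        have hpos : 1 ≤ ((Finset.univ.filter (fun f : VQ → VG =>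
            f ∈ R e ∧ ∀ v, v ∉ S e → f v = d₀)).card : ℝ) := by
          exact_mod_cast Finset.card_pos.2 ⟨f₀, hmem⟩
        calc (1:ℝ) = 1 ^ (x e) := (Real.one_rpow _).symm
          _ ≤ _ := Real.rpow_le_rpow zero_le_one hpos (hx e he)
      refine h1.trans ?_
      calc (1:ℝ) = ∏ _e ∈ T, (1:ℝ) := (Finset.prod_const_one).symm
        _ ≤ _ := Finset.prod_le_prod (fun _ _ => zero_le_one) hfact
    · rw [Finset.not_nonempty_iff_eq_empty] at hne
      rw [hne]
      simp only [Finset.card_empty, Nat.cast_zero]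
      exact Finset.prod_nonneg fun e he => Real.rpow_nonneg (Nat.cast_nonneg _) _
  | @insert v s' hv ih =>
    -- abbreviations
    set P : ι → ℕ := fun e => (Finset.univ.filter (fun f : VQ → VG =>
        f ∈ R e ∧ ∀ w, w ∉ S e → f w = d₀)).card with hP
    set R' : VG → ι → Set (VQ → VG) := fun a e => {f | Function.update f v a ∈ R e} with hR'
    set S' : ι → Finset VQ := fun e => (S e).erase v with hS'
    set N' : VG → ℕ := fun a => (Finset.univ.filter (fun f : VQ → VG =>
        (∀ e ∈ T, f ∈ R' a e) ∧ ∀ w, w ∉ s' → f w = d₀)).card with hN'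
    set P' : VG → ι → ℕ := fun a e => (Finset.univ.filter (fun f : VQ → VG =>
        f ∈ R' a e ∧ ∀ w, w ∉ S' e → f w = d₀)).card with hP'
    -- Step 1 : card big = ∑ a, N' a
    have step1 : (Finset.univ.filter (fun f : VQ → VG =>
        (∀ e ∈ T, f ∈ R e) ∧ ∀ w, w ∉ insert v s' → f w = d₀)).card = ∑ a : VG, N' a := by
      rw [Finset.card_eq_sum_card_fiberwise
        (f := fun f : VQ → VG => f v) (t := Finset.univ) (fun f _ => mem_univ _)]
      refine Finset.sum_congr rfl fun a _ => ?_
      refine Finset.card_bij' (fun f _ => Function.update f v d₀)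
        (fun g _ => Function.update g v a) ?_ ?_ ?_ ?_
      · intro f hf
        simp only [mem_filter, mem_univ, true_and] at hf ⊢
        obtain ⟨⟨hfR, hfd⟩, hfv⟩ := hf
        constructor
        · intro e he
          have : Function.update (Function.update f v d₀) v a = f := by
            rw [Function.update_idem, ← hfv, Function.update_eq_self]
          simp only [hR', Set.mem_setOf_eq, this]
          exact hfR e he
        · intro w hw
          by_cases hwv : w = v
          · subst hwv; rw [Function.update_self]
          · rw [Function.update_of_ne hwv]
            exact hfd w (by simp [Finset.mem_insert, hwv, hw])
      · intro g hg
        simp only [mem_filter, mem_univ, true_and] at hg ⊢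
        obtain ⟨hgR, hgd⟩ := hg
        refine ⟨⟨fun e he => ?_, fun w hw => ?_⟩, Function.update_self _ _ _⟩
        · have := hgR e he
          simpa only [hR', Set.mem_setOf_eq] using this
        · rw [Finset.mem_insert, not_or] at hw
          rw [Function.update_of_ne hw.1]
          exact hgd w hw.2
      · intro f hf
        simp only [mem_filter, mem_univ, true_and] at hf
        show Function.update (Function.update f v d₀) v a = f
        rw [Function.update_idem, ← hf.2, Function.update_eq_self]
      · intro g hg
        simp only [mem_filter, mem_univ, true_and] at hg
        have hgv : g v = d₀ := hg.2 v hv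
        show Function.update (Function.update g v a) v d₀ = g
        rw [Function.update_idem, ← hgv, Function.update_eq_self]
    -- Step 2 : ih applied to each a
    have step2 : ∀ a : VG, (N' a : ℝ) ≤ ∏ e ∈ T, (P' a e : ℝ) ^ (x e) := by
      intro a
      refine ih (S := S') (R := R' a) ?_ ?_ ?_
      · intro e he f g hfg
        refine hdet e he _ _ fun w hw => ?_
        by_cases hwv : w = v
        · subst hwv; rw [Function.update_self, Function.update_self]
        · rw [Function.update_of_ne hwv, Function.update_of_ne hwv]
          exact hfg w (Finset.mem_erase.2 ⟨hwv, hw⟩)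
      · intro e he w hw
        rw [hS', Finset.mem_erase] at hw
        have := hS e he hw.2
        rw [Finset.mem_insert] at this
        exact this.resolve_left hw.1
      · intro w hw
        have hwv : w ≠ v := fun h => hv (h ▸ hw)
        have := hcov w (Finset.mem_insert_of_mem hw)
        refine le_trans this (le_of_eq (Finset.sum_congr ?_ fun _ _ => rfl))
        refine Finset.filter_congr fun e he => ?_
        simp [hS', Finset.mem_erase, hwv]
    -- Step 3 : for e with v ∉ S e, P' a e = P e
    have step3 : ∀ a : VG, ∀ e ∈ T, v ∉ S e → P' a e = P e := by
      intro a e he hvS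
      refine congrArg Finset.card (Finset.filter_congr fun f _ => ?_)
      have h1 : S' e = S e := Finset.erase_eq_of_notMem hvS
      have h2 : f ∈ R' a e ↔ f ∈ R e := by
        simp only [hR', Set.mem_setOf_eq]
        refine hdet e he _ _ fun w hw => ?_
        rw [Function.update_of_ne (by rintro rfl; exact hvS hw)]
      rw [h1]
      simp [h2]
    -- Step 4 : for e with v ∈ S e, ∑ a, P' a e = P e
    have step4 : ∀ e ∈ T, v ∈ S e → ∑ a : VG, P' a e = P e := by
      intro e he hvS
      have hPe : P e = ∑ a : VG, ((Finset.univ.filter (fun f : VQ → VG =>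
          f ∈ R e ∧ ∀ w, w ∉ S e → f w = d₀)).filter (fun f => f v = a)).card := by
        rw [hP]
        exact Finset.card_eq_sum_card_fiberwise
          (f := fun f : VQ → VG => f v) (t := Finset.univ) (fun f _ => mem_univ _)
      rw [hPe]
      refine Finset.sum_congr rfl fun a _ => ?_
      refine Finset.card_bij' (fun g _ => Function.update g v a)
        (fun f _ => Function.update f v d₀) ?_ ?_ ?_ ?_
      · intro g hg
        simp only [hP', mem_filter, mem_univ, true_and] at hg ⊢
        obtain ⟨hgR, hgd⟩ := hg
        refine ⟨⟨?_, fun w hw => ?_⟩, Function.update_self _ _ _⟩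
        · simpa only [hR', Set.mem_setOf_eq] using hgR
        · have hwv : w ≠ v := fun h => hw (h ▸ hvS)
          rw [Function.update_of_ne hwv]
          refine hgd w fun hwS => hw ?_
          rw [hS', Finset.mem_erase] at hwS
          exact hwS.2
      · intro f hf
        simp only [hP', mem_filter, mem_univ, true_and] at hf ⊢
        obtain ⟨⟨hfR, hfd⟩, hfv⟩ := hf
        constructor
        · have hupd : Function.update (Function.update f v d₀) v a = f := by
            rw [Function.update_idem, ← hfv, Function.update_eq_self]
          simp only [hR', Set.mem_setOf_eq, hupd]
          exact hfR
        · intro w hw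
          by_cases hwv : w = v
          · subst hwv; rw [Function.update_self]
          · rw [Function.update_of_ne hwv]
            refine hfd w fun hwS => hw ?_
            rw [hS']; exact Finset.mem_erase.2 ⟨hwv, hwS⟩
      · intro g hg
        simp only [hP', mem_filter, mem_univ, true_and] at hg
        have hgv : g v = d₀ := hg.2 v (by rw [hS']; exact Finset.notMem_erase v (S e))
        show Function.update (Function.update g v a) v d₀ = g
        rw [Function.update_idem, ← hgv, Function.update_eq_self]
      · intro f hf
        simp only [mem_filter, mem_univ, true_and] at hf
        show Function.update (Function.update f v d₀) v a = f
        rw [Function.update_idem, ← hf.2, Function.update_eq_self]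
    -- Step 5 : combine
    calc ((Finset.univ.filter (fun f : VQ → VG =>
        (∀ e ∈ T, f ∈ R e) ∧ ∀ w, w ∉ insert v s' → f w = d₀)).card : ℝ)
        = ∑ a : VG, (N' a : ℝ) := by rw [step1]; push_cast; ring
      _ ≤ ∑ a : VG, ∏ e ∈ T, (P' a e : ℝ) ^ (x e) := Finset.sum_le_sum fun a _ => step2 a
      _ = ∑ a : VG, ((∏ e ∈ T.filter (fun e => v ∈ S e), (P' a e : ℝ) ^ (x e)) *
            ∏ e ∈ T.filter (fun e => ¬ v ∈ S e), (P e : ℝ) ^ (x e)) := by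
          refine Finset.sum_congr rfl fun a _ => ?_
          rw [← Finset.prod_filter_mul_prod_filter_not T (fun e => v ∈ S e)]
          congr 1
          refine Finset.prod_congr rfl fun e he => ?_
          rw [step3 a e (Finset.mem_of_mem_filter e he) (Finset.mem_filter.1 he).2]
      _ = (∑ a : VG, ∏ e ∈ T.filter (fun e => v ∈ S e), (P' a e : ℝ) ^ (x e)) *
            ∏ e ∈ T.filter (fun e => ¬ v ∈ S e), (P e : ℝ) ^ (x e) := by
          rw [Finset.sum_mul]
      _ ≤ (∏ e ∈ T.filter (fun e => v ∈ S e), (∑ a : VG, (P' a e : ℝ)) ^ (x e)) *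
            ∏ e ∈ T.filter (fun e => ¬ v ∈ S e), (P e : ℝ) ^ (x e) := by
          refine mul_le_mul_of_nonneg_right ?_ (Finset.prod_nonneg fun e he =>
            Real.rpow_nonneg (Nat.cast_nonneg _) _)
          refine holder_aux _ _ _ (fun e he a => Nat.cast_nonneg _)
            (fun e he => hx e (Finset.mem_of_mem_filter e he)) ?_
          exact hcov v (Finset.mem_insert_self v s')
      _ = ∏ e ∈ T, (P e : ℝ) ^ (x e) := by
          rw [← Finset.prod_filter_mul_prod_filter_not T (fun e => v ∈ S e)]
          congr 1
          refine Finset.prod_congr rfl fun e he => ?_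
          rw [← step4 e (Finset.mem_of_mem_filter e he) (Finset.mem_filter.1 he).2]
          push_cast
          rfl

section Main

/-- Match set of a direct query edge `(p, q)`. -/
def msD {VQ VG L : Type*} (labQ : VQ → L) (E : VG → VG → Prop) (labG : VG → L)
    (p q : VQ) : Set (VG × VG) :=
  {uv | labQ p = labG uv.1 ∧ labQ q = labG uv.2 ∧ E uv.1 uv.2}

/-- Match set of a reachability query edge `(p, q)`. -/
def msR {VQ VG L : Type*} (labQ : VQ → L) (E : VG → VG → Prop) (labG : VG → L)
    (p q : VQ) : Set (VG × VG) :=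
  {uv | labQ p = labG uv.1 ∧ labQ q = labG uv.2 ∧ Relation.TransGen E uv.1 uv.2}

section AuxHelpers

variable {VQ VG L : Type*} [Fintype VQ] [Fintype VG]

-- helper : projection count bound
private lemma proj_bound [Nonempty VG] (d₀ : VG) (p q : VQ) (M : Set (VG × VG)) :
    (Finset.univ.filter (fun f : VQ → VG =>
      (f p, f q) ∈ M ∧ ∀ w, w ∉ ({p, q} : Finset VQ) → f w = d₀)).card ≤ Nat.card M := by
  have h1 : Nat.card M = M.toFinset.card := by
    rw [Nat.card_coe_set_eq, Set.ncard_eq_toFinset_card']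
  rw [h1]
  apply Finset.card_le_card_of_injOn (fun f => (f p, f q))
  · intro f hf
    simp only [Finset.coe_filter, Set.mem_setOf_eq] at hf
    exact Finset.mem_coe.2 (Set.mem_toFinset.2 hf.2.1)
  · intro f hf g hg hfg
    simp only [Finset.coe_filter, Set.mem_setOf_eq] at hf hg
    funext w
    by_cases hwp : w = p
    · subst hwp; exact congrArg Prod.fst hfg
    by_cases hwq : w = q
    · subst hwq; exact congrArg Prod.snd hfg
    · rw [hf.2.2 w (by simp [hwp, hwq]), hg.2.2 w (by simp [hwp, hwq])]


private lemma split_sum {VQ : Type*} [Fintype VQ]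
    (q : Bool × VQ × VQ → Prop) [DecidablePred q]
    [DecidablePred (fun e : VQ × VQ => q (true, e))]
    [DecidablePred (fun e : VQ × VQ => q (false, e))] (F : Bool × VQ × VQ → ℝ) :
    ∑ z ∈ Finset.univ.filter q, F z
      = (∑ e ∈ Finset.univ.filter (fun e : VQ × VQ => q (true, e)), F (true, e))
        + ∑ e ∈ Finset.univ.filter (fun e : VQ × VQ => q (false, e)), F (false, e) := by
  rw [Finset.sum_filter, Finset.sum_filter, Finset.sum_filter]
  rw [Fintype.sum_prod_type, Fintype.sum_bool]
  congr 1 <;> refine Finset.sum_congr rfl fun a _ => ?_ <;> congr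

private lemma split_prod {VQ : Type*} [Fintype VQ]
    (q : Bool × VQ × VQ → Prop) [DecidablePred q]
    [DecidablePred (fun e : VQ × VQ => q (true, e))]
    [DecidablePred (fun e : VQ × VQ => q (false, e))] (F : Bool × VQ × VQ → ℝ) :
    ∏ z ∈ Finset.univ.filter q, F z
      = (∏ e ∈ Finset.univ.filter (fun e : VQ × VQ => q (true, e)), F (true, e))
        * ∏ e ∈ Finset.univ.filter (fun e : VQ × VQ => q (false, e)), F (false, e) := by
  rw [Finset.prod_filter, Finset.prod_filter, Finset.prod_filter]
  rw [Fintype.prod_prod_type, Fintype.prod_bool]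
  congr 1 <;> refine Finset.prod_congr rfl fun a _ => ?_ <;> congr

end AuxHelpers

/-- AGM bound for hybrid pattern queries: if `x` is a fractional edge cover
of `Q` (positive weights whose sum over the edges incident to each query node
is at least `1`), then the number of homomorphisms from `Q` to `G` is at most
the product over all edges `e` of `Q` of `|ms(e)| ^ (x e)`. -/
theorem agm_bound {VQ VG L : Type*} [Fintype VQ] [Fintype VG]
    (Ed Er : VQ → VQ → Prop) (labQ : VQ → L)
    (E : VG → VG → Prop) (labG : VG → L)
    (xd xr : VQ → VQ → ℝ)
    (hxd : ∀ p q, Ed p q → 0 < xd p q) (hxr : ∀ p q, Er p q → 0 < xr p q)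
    (hcover : ∀ q : VQ,
      1 ≤ (∑ e ∈ Finset.univ.filter
              (fun e : VQ × VQ => Ed e.1 e.2 ∧ (e.1 = q ∨ e.2 = q)), xd e.1 e.2)
        + ∑ e ∈ Finset.univ.filter
              (fun e : VQ × VQ => Er e.1 e.2 ∧ (e.1 = q ∨ e.2 = q)), xr e.1 e.2) :
    (Nat.card {h : VQ → VG // IsHom Ed Er labQ E labG h} : ℝ) ≤
      (∏ e ∈ Finset.univ.filter (fun e : VQ × VQ => Ed e.1 e.2),
        (Nat.card (msD labQ E labG e.1 e.2) : ℝ) ^ (xd e.1 e.2))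
      * ∏ e ∈ Finset.univ.filter (fun e : VQ × VQ => Er e.1 e.2),
        (Nat.card (msR labQ E labG e.1 e.2) : ℝ) ^ (xr e.1 e.2) := by
  by_cases hQ : IsEmpty VQ
  · have huniv : (Finset.univ : Finset (VQ × VQ)) = ∅ := Finset.univ_eq_empty
    rw [huniv, Finset.filter_empty, Finset.filter_empty, Finset.prod_empty,
      Finset.prod_empty]
    have h1 : Nat.card {h : VQ → VG // IsHom Ed Er labQ E labG h} = 1 := by
      rw [Nat.card_eq_one_iff_unique]
      refine ⟨⟨fun a b => Subtype.ext (funext fun v => hQ.elim v)⟩,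
        ⟨⟨fun v => hQ.elim v, fun v => hQ.elim v, fun p q _ => hQ.elim p,
          fun p q _ => hQ.elim p⟩⟩⟩
    rw [h1]; norm_num
  by_cases hG : IsEmpty VG
  · haveI : Nonempty VQ := not_isEmpty_iff.1 hQ
    haveI : IsEmpty (VQ → VG) := ⟨fun f => hG.false (f (Classical.arbitrary VQ))⟩
    haveI : IsEmpty {h : VQ → VG // IsHom Ed Er labQ E labG h} :=
      ⟨fun h => IsEmpty.false h.1⟩
    rw [Nat.card_of_isEmpty, Nat.cast_zero]
    exact mul_nonneg
      (Finset.prod_nonneg fun e _ => Real.rpow_nonneg (Nat.cast_nonneg _) _)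
      (Finset.prod_nonneg fun e _ => Real.rpow_nonneg (Nat.cast_nonneg _) _)
  haveI : Nonempty VG := not_isEmpty_iff.1 hG
  classical
  set d₀ : VG := Classical.arbitrary VG with hd₀
  -- the combined instance
  have main := agm_general (VQ := VQ) (VG := VG) (ι := Bool × VQ × VQ) d₀
    (Finset.univ.filter
      (fun z : Bool × VQ × VQ => if z.1 = true then Ed z.2.1 z.2.2 else Er z.2.1 z.2.2))
    (fun z => if z.1 = true then xd z.2.1 z.2.2 else xr z.2.1 z.2.2)
    ?hx Finset.univ (fun z => {z.2.1, z.2.2})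
    (fun z => {f | (f z.2.1, f z.2.2) ∈
      (if z.1 = true then msD labQ E labG z.2.1 z.2.2 else msR labQ E labG z.2.1 z.2.2)})
    ?hdet ?hS ?hcov
  case hx =>
    rintro ⟨b, p, q⟩ hz
    rw [Finset.mem_filter] at hz
    cases b
    · simp only [Bool.false_eq_true, if_false] at hz ⊢
      exact (hxr p q hz.2).le
    · simp only [if_true] at hz ⊢
      exact (hxd p q hz.2).le
  case hdet =>
    rintro ⟨b, p, q⟩ hz f g hfg
    have hp : f p = g p := hfg p (by simp)
    have hq : f q = g q := hfg q (by simp)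
    simp only [Set.mem_setOf_eq, hp, hq]
  case hS => intro z _; exact Finset.subset_univ _
  case hcov =>
    intro v _
    beta_reduce
    rw [Finset.filter_filter]
    rw [split_sum (fun z : Bool × VQ × VQ =>
      (if z.1 = true then Ed z.2.1 z.2.2 else Er z.2.1 z.2.2) ∧
        v ∈ ({z.2.1, z.2.2} : Finset VQ))]
    have e1 : (Finset.univ.filter (fun e : VQ × VQ =>
        (if (true : Bool) = true then Ed e.1 e.2 else Er e.1 e.2) ∧
          v ∈ ({e.1, e.2} : Finset VQ)))
        = Finset.univ.filter (fun e : VQ × VQ => Ed e.1 e.2 ∧ (e.1 = v ∨ e.2 = v)) := by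
      refine Finset.filter_congr fun e _ => ?_
      simp [eq_comm]
    have e2 : (Finset.univ.filter (fun e : VQ × VQ =>
        (if (false : Bool) = true then Ed e.1 e.2 else Er e.1 e.2) ∧
          v ∈ ({e.1, e.2} : Finset VQ)))
        = Finset.univ.filter (fun e : VQ × VQ => Er e.1 e.2 ∧ (e.1 = v ∨ e.2 = v)) := by
      refine Finset.filter_congr fun e _ => ?_
      simp [eq_comm]
    rw [e1, e2]
    simp only [if_true, Bool.false_eq_true, if_false]
    exact hcover v
  refine le_trans ?_ (le_trans main ?_)
  · -- left bound
    rw [Nat.card_eq_fintype_card, Fintype.card_subtype]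
    refine Nat.cast_le.2 (Finset.card_le_card ?_)
    intro f hf
    simp only [Finset.mem_filter, Set.mem_setOf_eq] at hf ⊢
    refine ⟨hf.1, ?_, fun v hv => absurd (Finset.mem_univ v) hv⟩
    rintro ⟨b, p, q⟩ hz
    have hHom := hf.2
    cases b
    · simp only [Bool.false_eq_true, if_false] at hz ⊢
      exact ⟨hHom.1 p, hHom.1 q, hHom.2.2 p q hz.2⟩
    · simp only [if_true] at hz ⊢
      exact ⟨hHom.1 p, hHom.1 q, hHom.2.1 p q hz.2⟩
  · -- right bound
    refine le_trans (Finset.prod_le_prod (g := fun z : Bool × VQ × VQ =>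
        ((Nat.card (if z.1 = true then msD labQ E labG z.2.1 z.2.2
          else msR labQ E labG z.2.1 z.2.2) : ℝ)) ^
        (if z.1 = true then xd z.2.1 z.2.2 else xr z.2.1 z.2.2))
        (fun z _ => Real.rpow_nonneg (Nat.cast_nonneg _) _) ?_) ?_
    · rintro ⟨b, p, q⟩ hz
      rw [Finset.mem_filter] at hz
      simp only [Set.mem_setOf_eq]
      cases b
      · simp only [Bool.false_eq_true, if_false] at hz ⊢
        refine Real.rpow_le_rpow (Nat.cast_nonneg _) ?_ (hxr p q hz.2).le
        exact_mod_cast proj_bound d₀ p q _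
      · simp only [if_true] at hz ⊢
        refine Real.rpow_le_rpow (Nat.cast_nonneg _) ?_ (hxd p q hz.2).le
        exact_mod_cast proj_bound d₀ p q _
    · rw [split_prod (fun z : Bool × VQ × VQ =>
          if z.1 = true then Ed z.2.1 z.2.2 else Er z.2.1 z.2.2)
          (fun z => ((Nat.card (if z.1 = true then msD labQ E labG z.2.1 z.2.2
              else msR labQ E labG z.2.1 z.2.2) : ℝ)) ^
            (if z.1 = true then xd z.2.1 z.2.2 else xr z.2.1 z.2.2))]
      refine le_of_eq (congrArg₂ (· * ·) ?_ ?_)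
      · exact Finset.prod_congr (Finset.filter_congr fun e _ => by simp) fun e _ => by simp
      · exact Finset.prod_congr (Finset.filter_congr fun e _ => by simp) fun e _ => by simp
end Main
end

section
/- AGM bound over a runtime index graph: let G be a data graph with finite node set, let G_Q be a runtime index graph of Q over G, and let x be a fractional edge cover of Q. Then the number of homomorphisms from Q to G is at most the product over all edges e of Q of |cos(e)|^{x_e}, where |cos(e)| is the cardinality of the candidate occurrence set of e in G_Q. -/
open scoped Classical

/-- Occurrence set of a query edge `(p, q)`. -/
def os {VQ VG L : Type*} (Ed Er : VQ → VQ → Prop) (labQ : VQ → L)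
    (E : VG → VG → Prop) (labG : VG → L) (p q : VQ) : Set (VG × VG) :=
  {uv | ∃ h, IsHom Ed Er labQ E labG h ∧ h p = uv.1 ∧ h q = uv.2}

open MeasureTheory Finset

theorem sum_rpow_le' {F : Type*} (s : Finset F) (g : F → ENNReal) {X : ℝ} (hX : 1 ≤ X) :
    ∑ a ∈ s, g a ^ X ≤ (∑ a ∈ s, g a) ^ X := by
  induction s using Finset.induction_on with
  | empty => simp [ENNReal.zero_rpow_of_pos (lt_of_lt_of_le one_pos hX)]
  | @insert _ _ h ih =>
      rw [Finset.sum_insert h, Finset.sum_insert h]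
      exact le_trans (add_le_add_right ih _) (ENNReal.add_rpow_le_rpow_add _ _ hX)

theorem holder_count {F ι : Type*} [Fintype F] [MeasurableSpace F] [MeasurableSingletonClass F]
    (t : Finset ι) (g : ι → F → ENNReal) (x : ι → ℝ) (hx : ∀ i ∈ t, 0 ≤ x i)
    (hX : 1 ≤ ∑ i ∈ t, x i) :
    ∫⁻ a, ∏ i ∈ t, g i a ^ x i ∂Measure.count
      ≤ ∏ i ∈ t, (∫⁻ a, g i a ∂Measure.count) ^ x i := by
  set X := ∑ i ∈ t, x i with hXdef
  have hX0 : 0 < X := lt_of_lt_of_le one_pos hX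
  have key : ∀ i, ∫⁻ a, g i a ^ X ∂Measure.count ≤ (∫⁻ a, g i a ∂Measure.count) ^ X := by
    intro i
    rw [lintegral_count, lintegral_count, tsum_fintype, tsum_fintype]
    exact sum_rpow_le' _ _ hX
  calc ∫⁻ a, ∏ i ∈ t, g i a ^ x i ∂Measure.count
      = ∫⁻ a, ∏ i ∈ t, (g i a ^ X) ^ (x i / X) ∂Measure.count := by
        congr 1; funext a; refine Finset.prod_congr rfl fun i _ => ?_
        rw [← ENNReal.rpow_mul, mul_div_cancel₀ _ hX0.ne']
    _ ≤ ∏ i ∈ t, (∫⁻ a, g i a ^ X ∂Measure.count) ^ (x i / X) := by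
        refine ENNReal.lintegral_prod_norm_pow_le t
          (fun i _ => (Measurable.of_discrete).aemeasurable) ?_
          (fun i hi => div_nonneg (hx i hi) hX0.le)
        rw [← Finset.sum_div, ← hXdef, div_self hX0.ne']
    _ ≤ ∏ i ∈ t, ((∫⁻ a, g i a ∂Measure.count) ^ X) ^ (x i / X) := by
        refine Finset.prod_le_prod' fun i hi => ?_
        exact ENNReal.rpow_le_rpow (key i) (div_nonneg (hx i hi) hX0.le)
    _ = ∏ i ∈ t, (∫⁻ a, g i a ∂Measure.count) ^ x i := by
        refine Finset.prod_congr rfl fun i _ => ?_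
        rw [← ENNReal.rpow_mul, mul_div_cancel₀ _ hX0.ne']

theorem agm_core {V F ι : Type*} [Fintype V] [DecidableEq V] [Fintype F]
    [MeasurableSpace F] [MeasurableSingletonClass F]
    (t : Finset ι) (e : ι → Finset V) (x : ι → ℝ) (w : ι → (V → F) → ENNReal)
    (hx : ∀ i ∈ t, 0 ≤ x i)
    (hw : ∀ i ∈ t, ∀ f g : V → F, (∀ v ∈ e i, f v = g v) → w i f = w i g)
    (s : Finset V) (hcov : ∀ v ∈ s, 1 ≤ ∑ i ∈ t.filter (fun i => v ∈ e i), x i)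
    (x₀ : V → F) :
    (∫⋯∫⁻_s, (fun f => ∏ i ∈ t, w i f ^ x i) ∂(fun _ => Measure.count)) x₀
      ≤ ∏ i ∈ t, ((∫⋯∫⁻_(e i ∩ s), w i ∂(fun _ => Measure.count)) x₀) ^ x i := by
  induction s using Finset.induction_on generalizing x₀ with
  | empty => simp
  | @insert v s hv ih =>
    have hcov' : ∀ u ∈ s, 1 ≤ ∑ i ∈ t.filter (fun i => u ∈ e i), x i :=
      fun u hu => hcov u (mem_insert_of_mem hu)
    rw [lmarginal_insert _ Measurable.of_discrete hv]
    refine le_trans (lintegral_mono fun a => ih hcov' (Function.update x₀ v a)) ?_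
    have hconst : ∀ i ∈ t, v ∉ e i → ∀ a : F,
        (∫⋯∫⁻_(e i ∩ s), w i ∂(fun _ => Measure.count)) (Function.update x₀ v a)
          = (∫⋯∫⁻_(e i ∩ s), w i ∂(fun _ => Measure.count)) x₀ := by
      intro i hi hvi a
      have hv' : v ∉ e i ∩ s := fun h => hvi (Finset.mem_of_mem_inter_left h)
      rw [lmarginal_update_of_notMem Measurable.of_discrete hv']
      congr 1
      funext f
      refine hw i hi _ _ fun u hu => Function.update_of_ne ?_ a f
      rintro rfl; exact hvi hu
    have hsplit : ∀ a : F, ∏ i ∈ t,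
          ((∫⋯∫⁻_(e i ∩ s), w i ∂(fun _ => Measure.count)) (Function.update x₀ v a)) ^ x i
        = (∏ i ∈ t.filter (fun i => ¬ v ∈ e i),
            ((∫⋯∫⁻_(e i ∩ s), w i ∂(fun _ => Measure.count)) x₀) ^ x i)
          * ∏ i ∈ t.filter (fun i => v ∈ e i),
            ((∫⋯∫⁻_(e i ∩ s), w i ∂(fun _ => Measure.count)) (Function.update x₀ v a)) ^ x i := by
      intro a
      rw [mul_comm, ← Finset.prod_filter_mul_prod_filter_not t (fun i => v ∈ e i)]
      congr 1
      refine Finset.prod_congr rfl fun i hi => ?_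
      rw [hconst i (Finset.mem_of_mem_filter i hi) (Finset.mem_filter.mp hi).2 a]
    simp_rw [hsplit]
    rw [lintegral_const_mul _ Measurable.of_discrete]
    have hH := holder_count (t.filter (fun i => v ∈ e i))
        (fun i a => (∫⋯∫⁻_(e i ∩ s), w i ∂(fun _ => Measure.count)) (Function.update x₀ v a)) x
        (fun i hi => hx i (Finset.mem_of_mem_filter i hi)) (hcov v (mem_insert_self v s))
    beta_reduce at hH
    refine le_trans (mul_le_mul_right hH _) (le_of_eq ?_)
    rw [mul_comm, ← Finset.prod_filter_mul_prod_filter_not t (fun i => v ∈ e i)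
      (fun i => ((∫⋯∫⁻_(e i ∩ insert v s), w i ∂(fun _ => Measure.count)) x₀) ^ x i)]
    congr 1
    · refine Finset.prod_congr rfl fun i hi => ?_
      have hvi : v ∈ e i := (Finset.mem_filter.mp hi).2
      have hv' : v ∉ e i ∩ s := fun h => hv (Finset.mem_of_mem_inter_right h)
      have h2 : e i ∩ insert v s = insert v (e i ∩ s) := by
        rw [Finset.inter_comm, Finset.insert_inter_of_mem hvi, Finset.inter_comm]
      rw [h2, lmarginal_insert _ Measurable.of_discrete hv']
    · refine Finset.prod_congr rfl fun i hi => ?_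
      have hvi : ¬ v ∈ e i := (Finset.mem_filter.mp hi).2
      have h2 : e i ∩ insert v s = e i ∩ s := by
        rw [Finset.inter_comm, Finset.insert_inter_of_notMem hvi, Finset.inter_comm]
      rw [h2]

theorem marg_pair_le {V F : Type*} [Fintype V] [DecidableEq V] [Fintype F]
    [MeasurableSpace F] [MeasurableSingletonClass F] (p q : V) (C : Set (F × F)) (x₀ : V → F) :
    (∫⋯∫⁻_({p, q} : Finset V), (fun f : V → F => if (f p, f q) ∈ C then (1:ENNReal) else 0)
        ∂(fun _ => Measure.count)) x₀ ≤ (Nat.card C : ENNReal) := by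
  by_cases hpq : p = q
  · subst hpq
    have : ({p, p} : Finset V) = {p} := by simp
    rw [this, lmarginal_singleton]
    beta_reduce
    simp only [Function.update_self]
    rw [lintegral_count, tsum_fintype]
    have h1 : ∑ a : F, (if (a, a) ∈ C then (1:ENNReal) else 0)
        = ((univ.filter (fun a : F => (a, a) ∈ C)).card : ENNReal) := by
      rw [Finset.card_filter]
      push_cast
      exact Finset.sum_congr rfl fun a _ => by split <;> simp
    rw [h1]
    have h2 : (univ.filter (fun a : F => (a, a) ∈ C)).card ≤ Nat.card C := by
      have := Fintype.card_subtype (p := fun a : F => (a, a) ∈ C)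
      rw [← this]
      have hinj : Function.Injective (fun a : {a : F // (a, a) ∈ C} => (⟨(a.1, a.1), a.2⟩ : C)) := by
        intro a b hab
        simp only [Subtype.mk.injEq, Prod.mk.injEq] at hab
        exact Subtype.ext hab.1
      calc Fintype.card {a : F // (a, a) ∈ C} = Nat.card {a : F // (a, a) ∈ C} :=
            (Nat.card_eq_fintype_card).symm
        _ ≤ Nat.card C := Nat.card_le_card_of_injective _ hinj
    exact_mod_cast h2
  · have hq : q ∉ ({p} : Finset V)ᶜ.filter (fun _ => False) := by simp
    have hins : ({p, q} : Finset V) = insert p {q} := rfl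
    have hpq' : p ∉ ({q} : Finset V) := by simp [hpq]
    rw [hins, lmarginal_insert _ Measurable.of_discrete hpq']
    simp_rw [lmarginal_singleton]
    have heval : ∀ a b : F,
        (Function.update (Function.update x₀ p a) q b p, Function.update (Function.update x₀ p a) q b q) = (a, b) := by
      intro a b
      rw [Function.update_self, Function.update_of_ne hpq, Function.update_self]
    simp_rw [heval]
    rw [lintegral_count, tsum_fintype]
    have : ∀ a : F, ∫⁻ b, (if (a, b) ∈ C then (1:ENNReal) else 0) ∂Measure.count
        = ∑ b : F, (if (a, b) ∈ C then (1:ENNReal) else 0) := by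
      intro a; rw [lintegral_count, tsum_fintype]
    simp_rw [this]
    have hsp := Fintype.sum_prod_type (f := fun ab : F × F => if ab ∈ C then (1:ENNReal) else 0)
    beta_reduce at hsp
    rw [← hsp]
    have h1 : ∑ ab : F × F, (if ab ∈ C then (1:ENNReal) else 0)
        = ((univ.filter (fun ab : F × F => ab ∈ C)).card : ENNReal) := by
      rw [Finset.card_filter]
      push_cast
      exact Finset.sum_congr rfl fun a _ => by split <;> simp
    rw [h1]
    have h2 : (univ.filter (fun ab : F × F => ab ∈ C)).card = Nat.card C := by
      rw [← Fintype.card_subtype, Nat.card_eq_fintype_card]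
    rw [h2]

theorem pi_count_singleton {V F : Type*} [Fintype V] [Fintype F]
    [MeasurableSpace F] [MeasurableSingletonClass F] (f : V → F) :
    Measure.pi (fun _ : V => (Measure.count : Measure F)) {f} = 1 := by
  have : ({f} : Set (V → F)) = Set.pi Set.univ (fun v => {f v}) := by
    ext g; simp [Set.eq_singleton_iff_unique_mem, funext_iff, Set.mem_pi]
  rw [this, Measure.pi_pi]
  simp [Measure.count_singleton]

/-- AGM bound over a runtime index graph: if `G_Q` is a runtime index graph
of `Q` over `G` (so `os(e) ⊆ cos(e) ⊆ ms(e)` for every edge `e` of `Q`) and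
`x` is a fractional edge cover of `Q`, then the number of homomorphisms from
`Q` to `G` is at most the product over all edges `e` of `Q` of
`|cos(e)| ^ (x e)`. -/
theorem agm_bound_rig {VQ VG L : Type*} [Fintype VQ] [Fintype VG]
    (Ed Er : VQ → VQ → Prop) (labQ : VQ → L)
    (E : VG → VG → Prop) (labG : VG → L)
    (cosD cosR : VQ → VQ → Set (VG × VG))
    (hrigD : ∀ p q, Ed p q →
      os Ed Er labQ E labG p q ⊆ cosD p q ∧ cosD p q ⊆ msD labQ E labG p q)
    (hrigR : ∀ p q, Er p q →
      os Ed Er labQ E labG p q ⊆ cosR p q ∧ cosR p q ⊆ msR labQ E labG p q)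
    (xd xr : VQ → VQ → ℝ)
    (hxd : ∀ p q, Ed p q → 0 < xd p q) (hxr : ∀ p q, Er p q → 0 < xr p q)
    (hcover : ∀ q : VQ,
      1 ≤ (∑ e ∈ Finset.univ.filter
              (fun e : VQ × VQ => Ed e.1 e.2 ∧ (e.1 = q ∨ e.2 = q)), xd e.1 e.2)
        + ∑ e ∈ Finset.univ.filter
              (fun e : VQ × VQ => Er e.1 e.2 ∧ (e.1 = q ∨ e.2 = q)), xr e.1 e.2) :
    (Nat.card {h : VQ → VG // IsHom Ed Er labQ E labG h} : ℝ) ≤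
      (∏ e ∈ Finset.univ.filter (fun e : VQ × VQ => Ed e.1 e.2),
        (Nat.card (cosD e.1 e.2) : ℝ) ^ (xd e.1 e.2))
      * ∏ e ∈ Finset.univ.filter (fun e : VQ × VQ => Er e.1 e.2),
        (Nat.card (cosR e.1 e.2) : ℝ) ^ (xr e.1 e.2) := by
  by_cases hVG : Nonempty VG
  case neg =>
    by_cases hVQ : Nonempty VQ
    case pos =>
      haveI : IsEmpty {h : VQ → VG // IsHom Ed Er labQ E labG h} :=
        ⟨fun h => hVG ⟨h.1 (Classical.arbitrary VQ)⟩⟩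
      rw [Nat.card_of_isEmpty]
      push_cast
      have h1 : (0:ℝ) ≤ ∏ e ∈ Finset.univ.filter (fun e : VQ × VQ => Ed e.1 e.2),
          (Nat.card (cosD e.1 e.2) : ℝ) ^ (xd e.1 e.2) :=
        Finset.prod_nonneg fun i _ => Real.rpow_nonneg (Nat.cast_nonneg _) _
      have h2 : (0:ℝ) ≤ ∏ e ∈ Finset.univ.filter (fun e : VQ × VQ => Er e.1 e.2),
          (Nat.card (cosR e.1 e.2) : ℝ) ^ (xr e.1 e.2) :=
        Finset.prod_nonneg fun i _ => Real.rpow_nonneg (Nat.cast_nonneg _) _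
      exact mul_nonneg h1 h2
    case neg =>
      haveI : IsEmpty VQ := not_nonempty_iff.mp hVQ
      haveI : Unique {h : VQ → VG // IsHom Ed Er labQ E labG h} := by
        refine ⟨⟨⟨fun q => isEmptyElim q, ?_, ?_, ?_⟩⟩, ?_⟩
        · exact fun q => isEmptyElim q
        · exact fun p q _ => isEmptyElim p
        · exact fun p q _ => isEmptyElim p
        · exact fun f => Subtype.ext (funext fun q => isEmptyElim q)
      rw [Nat.card_unique]
      haveI : IsEmpty (VQ × VQ) := ⟨fun pq => isEmptyElim pq.1⟩
      rw [Finset.univ_eq_empty (α := VQ × VQ)]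
      simp
  case pos =>
    letI : MeasurableSpace VG := ⊤
    haveI : MeasurableSingletonClass VG := ⟨fun _ => trivial⟩
    letI : DecidableEq VQ := Classical.decEq _
    haveI := hVG
    set ι := (VQ × VQ) ⊕ (VQ × VQ) with hι
    set Q : ι → Prop := Sum.elim (fun pq => Ed pq.1 pq.2) (fun pq => Er pq.1 pq.2) with hQ
    set t : Finset ι := Finset.univ.filter Q with ht
    set e : ι → Finset VQ :=
      Sum.elim (fun pq => ({pq.1, pq.2} : Finset VQ)) (fun pq => {pq.1, pq.2}) with he
    set xw : ι → ℝ := Sum.elim (fun pq => xd pq.1 pq.2) (fun pq => xr pq.1 pq.2) with hxw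
    set w : ι → (VQ → VG) → ENNReal :=
      Sum.elim (fun pq (f : VQ → VG) => if (f pq.1, f pq.2) ∈ cosD pq.1 pq.2 then 1 else 0)
        (fun pq (f : VQ → VG) => if (f pq.1, f pq.2) ∈ cosR pq.1 pq.2 then 1 else 0) with hwdef
    set N : ι → ENNReal := Sum.elim (fun pq => (Nat.card (cosD pq.1 pq.2) : ENNReal))
      (fun pq => (Nat.card (cosR pq.1 pq.2) : ENNReal)) with hN
    have hx : ∀ i ∈ t, 0 ≤ xw i := by
      rintro (pq|pq) hi <;>
        simp only [ht, hQ, Finset.mem_filter, Sum.elim_inl, Sum.elim_inr] at hi <;>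
        simp only [hxw, Sum.elim_inl, Sum.elim_inr]
      · exact (hxd _ _ hi.2).le
      · exact (hxr _ _ hi.2).le
    have hwdep : ∀ i ∈ t, ∀ f g : VQ → VG, (∀ v ∈ e i, f v = g v) → w i f = w i g := by
      rintro (pq|pq) _ f g hfg <;>
        simp only [hwdef, he, Sum.elim_inl, Sum.elim_inr] at hfg ⊢ <;>
        rw [hfg pq.1 (by simp), hfg pq.2 (by simp)]
    have hcov : ∀ v : VQ, v ∈ (Finset.univ : Finset VQ) →
        1 ≤ ∑ i ∈ t.filter (fun i => v ∈ e i), xw i := by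
      intro v _
      rw [ht, Finset.filter_filter, Finset.sum_filter]
      have hsp := Fintype.sum_sum_type
        (f := fun i : ι => if Q i ∧ v ∈ e i then xw i else 0)
      beta_reduce at hsp
      rw [hsp]
      have h1 : ∀ pq : VQ × VQ, (if Q (Sum.inl pq) ∧ v ∈ e (Sum.inl pq) then xw (Sum.inl pq) else 0)
          = (if Ed pq.1 pq.2 ∧ (pq.1 = v ∨ pq.2 = v) then xd pq.1 pq.2 else 0) := by
        intro pq
        simp only [hQ, he, hxw, Sum.elim_inl, Finset.mem_insert, Finset.mem_singleton]
        refine if_congr (and_congr_right fun _ => ?_) rfl rfl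
        constructor
        · rintro (h|h) <;> [left; right] <;> exact h.symm
        · rintro (h|h) <;> [left; right] <;> exact h.symm
      have h2 : ∀ pq : VQ × VQ, (if Q (Sum.inr pq) ∧ v ∈ e (Sum.inr pq) then xw (Sum.inr pq) else 0)
          = (if Er pq.1 pq.2 ∧ (pq.1 = v ∨ pq.2 = v) then xr pq.1 pq.2 else 0) := by
        intro pq
        simp only [hQ, he, hxw, Sum.elim_inr, Finset.mem_insert, Finset.mem_singleton]
        refine if_congr (and_congr_right fun _ => ?_) rfl rfl
        constructor
        · rintro (h|h) <;> [left; right] <;> exact h.symm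
        · rintro (h|h) <;> [left; right] <;> exact h.symm
      rw [Finset.sum_congr rfl fun pq _ => h1 pq, Finset.sum_congr rfl fun pq _ => h2 pq]
      rw [← Finset.sum_filter, ← Finset.sum_filter]
      exact hcover v
    set x₀ : VQ → VG := Classical.arbitrary _ with hx₀
    -- main chain in ENNReal
    have key : (Nat.card {h : VQ → VG // IsHom Ed Er labQ E labG h} : ENNReal)
        ≤ ∏ i ∈ t, N i ^ xw i := by
      have step1 : (Nat.card {h : VQ → VG // IsHom Ed Er labQ E labG h} : ENNReal)
          ≤ ∑ f : VQ → VG, ∏ i ∈ t, w i f ^ xw i := by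
        have hcard : (Nat.card {h : VQ → VG // IsHom Ed Er labQ E labG h} : ENNReal)
            = ∑ f : VQ → VG, (if IsHom Ed Er labQ E labG f then (1:ENNReal) else 0) := by
          rw [Nat.card_eq_fintype_card, Fintype.card_subtype, Finset.card_filter]
          push_cast
          exact Finset.sum_congr rfl fun f _ => by split <;> simp
        rw [hcard]
        refine Finset.sum_le_sum fun f _ => ?_
        split
        case isTrue hf =>
          have hone : ∀ i ∈ t, w i f ^ xw i = 1 := by
            rintro (pq|pq) hi <;>
              simp only [ht, hQ, Finset.mem_filter, Sum.elim_inl, Sum.elim_inr] at hi <;>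
              simp only [hwdef, hxw, Sum.elim_inl, Sum.elim_inr]
            · have : (f pq.1, f pq.2) ∈ cosD pq.1 pq.2 :=
                (hrigD pq.1 pq.2 hi.2).1 ⟨f, hf, rfl, rfl⟩
              rw [if_pos this, ENNReal.one_rpow]
            · have : (f pq.1, f pq.2) ∈ cosR pq.1 pq.2 :=
                (hrigR pq.1 pq.2 hi.2).1 ⟨f, hf, rfl, rfl⟩
              rw [if_pos this, ENNReal.one_rpow]
          rw [Finset.prod_congr rfl hone, Finset.prod_const_one]
        case isFalse => exact zero_le
      have step2 : ∑ f : VQ → VG, ∏ i ∈ t, w i f ^ xw i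
          = (∫⋯∫⁻_Finset.univ, (fun f => ∏ i ∈ t, w i f ^ xw i)
              ∂(fun _ : VQ => (Measure.count : Measure VG))) x₀ := by
        rw [← lintegral_eq_lmarginal_univ, lintegral_fintype]
        refine Finset.sum_congr rfl fun f _ => ?_
        rw [pi_count_singleton, mul_one]
      have step3 := agm_core t e xw w hx hwdep Finset.univ hcov x₀
      have step4 : ∀ i ∈ t, ((∫⋯∫⁻_(e i ∩ Finset.univ), w i
          ∂(fun _ : VQ => (Measure.count : Measure VG))) x₀) ^ xw i ≤ N i ^ xw i := by
        rintro (pq|pq) hi <;>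
          refine ENNReal.rpow_le_rpow ?_ (hx _ hi) <;>
          rw [Finset.inter_univ] <;>
          simp only [he, hwdef, hN, Sum.elim_inl, Sum.elim_inr]
        · exact marg_pair_le pq.1 pq.2 (cosD pq.1 pq.2) x₀
        · exact marg_pair_le pq.1 pq.2 (cosR pq.1 pq.2) x₀
      calc (Nat.card {h : VQ → VG // IsHom Ed Er labQ E labG h} : ENNReal)
          ≤ ∑ f : VQ → VG, ∏ i ∈ t, w i f ^ xw i := step1
        _ = _ := step2
        _ ≤ _ := step3
        _ ≤ ∏ i ∈ t, N i ^ xw i := Finset.prod_le_prod' step4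
    -- split the product over the sum type
    have hsplit : ∏ i ∈ t, N i ^ xw i
        = (∏ pq ∈ Finset.univ.filter (fun pq : VQ × VQ => Ed pq.1 pq.2),
            (Nat.card (cosD pq.1 pq.2) : ENNReal) ^ xd pq.1 pq.2)
          * ∏ pq ∈ Finset.univ.filter (fun pq : VQ × VQ => Er pq.1 pq.2),
            (Nat.card (cosR pq.1 pq.2) : ENNReal) ^ xr pq.1 pq.2 := by
      rw [ht, Finset.prod_filter]
      have hsp := Fintype.prod_sum_type (f := fun i : ι => if Q i then N i ^ xw i else 1)
      beta_reduce at hsp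
      rw [hsp]
      rw [Finset.prod_filter, Finset.prod_filter]
      congr 1 <;> exact Finset.prod_congr rfl fun pq _ => rfl
    rw [hsplit] at key
    -- convert to ℝ
    have hD_ne : ∀ pq : VQ × VQ, pq ∈ Finset.univ.filter (fun pq : VQ × VQ => Ed pq.1 pq.2) →
        (Nat.card (cosD pq.1 pq.2) : ENNReal) ^ xd pq.1 pq.2 < ⊤ := fun pq hpq =>
      ENNReal.rpow_lt_top_of_nonneg (hxd _ _ (Finset.mem_filter.mp hpq).2).le
        (ENNReal.natCast_ne_top _)
    have hR_ne : ∀ pq : VQ × VQ, pq ∈ Finset.univ.filter (fun pq : VQ × VQ => Er pq.1 pq.2) →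
        (Nat.card (cosR pq.1 pq.2) : ENNReal) ^ xr pq.1 pq.2 < ⊤ := fun pq hpq =>
      ENNReal.rpow_lt_top_of_nonneg (hxr _ _ (Finset.mem_filter.mp hpq).2).le
        (ENNReal.natCast_ne_top _)
    have hprodD : (∏ pq ∈ Finset.univ.filter (fun pq : VQ × VQ => Ed pq.1 pq.2),
        (Nat.card (cosD pq.1 pq.2) : ENNReal) ^ xd pq.1 pq.2) ≠ ⊤ :=
      (ENNReal.prod_lt_top hD_ne).ne
    have hprodR : (∏ pq ∈ Finset.univ.filter (fun pq : VQ × VQ => Er pq.1 pq.2),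
        (Nat.card (cosR pq.1 pq.2) : ENNReal) ^ xr pq.1 pq.2) ≠ ⊤ :=
      (ENNReal.prod_lt_top hR_ne).ne
    have hfin := (ENNReal.toReal_le_toReal (ENNReal.natCast_ne_top _)
      (ENNReal.mul_ne_top hprodD hprodR)).mpr key
    have hnat : ∀ n : ℕ, ((n : ENNReal)).toReal = (n : ℝ) := fun n => rfl
    rw [hnat, ENNReal.toReal_mul, ENNReal.toReal_prod, ENNReal.toReal_prod] at hfin
    refine le_trans hfin (le_of_eq ?_)
    congr 1
    · exact Finset.prod_congr rfl fun pq _ => by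
        rw [← ENNReal.toReal_rpow, hnat]
    · exact Finset.prod_congr rfl fun pq _ => by
        rw [← ENNReal.toReal_rpow, hnat]
end
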